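/- Let d, n ≥ 1, let f_1, …, f_n : ℝ^d → ℝ be differentiable with f := (1/n)∑_{i=1}^n f_i, and suppose the family is average L-smooth for some L > 0, i.e. (1/n)∑_{i=1}^n ‖∇f_i(x) − ∇f_i(y)‖² ≤ L²‖x − y‖² for all x, y. Let x, x', g ∈ ℝ^d and let b' ≥ 1 be an integer. Then, averaging over all tuples j = (j_1, …, j_{b'}) ∈ {1, …, n}^{b'}, (1/n^{b'}) ∑_{j ∈ {1,…,n}^{b'}} ‖ g + (1/b')∑_{k=1}^{b'} (∇f_{j_k}(x') − ∇f_{j_k}(x)) − ∇f(x') ‖² ≤ (L²/b')‖x' − x‖² + ‖g − ∇f(x)‖². -/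

import Mathlib

open scoped RealInnerProductSpace BigOperators

section Aux

variable {E : Type*} [NormedAddCommGroup E] [InnerProductSpace ℝ E]

omit [InnerProductSpace ℝ E] in
lemma aux_cons_sum {n b : ℕ} (W : Fin n → E) (i : Fin n) (j' : Fin b → Fin n) :
    ∑ k, W ((Fin.consEquiv (fun _ : Fin (b+1) => Fin n)) (i, j') k)
      = W i + ∑ k, W (j' k) := by
  have h : (fun k => W ((Fin.consEquiv (fun _ : Fin (b+1) => Fin n)) (i, j') k))
      = Fin.cons (W i) (fun k => W (j' k)) := by
    funext k
    refine Fin.cases ?_ (fun k => ?_) k <;> simp [Fin.consEquiv]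
  rw [show (∑ k, W ((Fin.consEquiv (fun _ : Fin (b+1) => Fin n)) (i, j') k))
      = ∑ k, (Fin.cons (W i) (fun k => W (j' k)) : Fin (b+1) → E) k from by rw [h],
    Fin.sum_cons]

omit [InnerProductSpace ℝ E] in
/-- Sum of tuple-sums vanishes when the family sums to zero. -/
lemma aux_sum_zero {n : ℕ} (W : Fin n → E) (hW : ∑ i, W i = 0) :
    ∀ b : ℕ, ∑ j : Fin b → Fin n, ∑ k, W (j k) = 0 := by
  intro b
  induction b with
  | zero => simp
  | succ b ih =>
      rw [← (Fin.consEquiv (fun _ : Fin (b+1) => Fin n)).sum_comp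
        (fun j => ∑ k, W (j k)), Fintype.sum_prod_type]
      simp_rw [aux_cons_sum]
      rw [Finset.sum_comm]
      simp [Finset.sum_add_distrib, ih, hW, ← Finset.smul_sum]

/-- Variance-style identity: sum of squared norms of tuple-sums. -/
lemma aux_sum_norm {n : ℕ} (W : Fin n → E) (hW : ∑ i, W i = 0) :
    ∀ b : ℕ, (∑ j : Fin b → Fin n, ‖∑ k, W (j k)‖ ^ 2) * (n : ℝ)
      = (b : ℝ) * (n : ℝ) ^ b * ∑ i, ‖W i‖ ^ 2 := by
  intro b
  induction b with
  | zero => simp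
  | succ b ih =>
      rw [← (Fin.consEquiv (fun _ : Fin (b+1) => Fin n)).sum_comp
        (fun j => ‖∑ k, W (j k)‖ ^ 2), Fintype.sum_prod_type]
      simp_rw [aux_cons_sum, norm_add_sq_real, Finset.sum_add_distrib]
      simp only [← Finset.mul_sum, ← inner_sum, aux_sum_zero W hW b,
        inner_zero_right, mul_zero, Finset.sum_const_zero, add_zero,
        Finset.sum_const, Finset.card_univ, Fintype.card_fun, Fintype.card_fin,
        nsmul_eq_mul]
      set T := ∑ i, ‖W i‖ ^ 2 with hT
      set S := ∑ j : Fin b → Fin n, ‖∑ k, W (j k)‖ ^ 2 with hS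
      push_cast [pow_succ]
      linear_combination (n : ℝ) * ih

end Aux

theorem stmt_5 (d n : ℕ) (hd : 1 ≤ d) (hn : 1 ≤ n)
    (f : Fin n → EuclideanSpace ℝ (Fin d) → ℝ)
    (hf : ∀ i, Differentiable ℝ (f i))
    (F : EuclideanSpace ℝ (Fin d) → ℝ)
    (hF : F = fun x => (1 / (n : ℝ)) * ∑ i, f i x)
    (L : ℝ) (hL : 0 < L)
    (havg : ∀ x y : EuclideanSpace ℝ (Fin d),
      (1 / (n : ℝ)) * ∑ i, ‖gradient (f i) x - gradient (f i) y‖ ^ 2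
        ≤ L ^ 2 * ‖x - y‖ ^ 2)
    (x x' g : EuclideanSpace ℝ (Fin d)) (b' : ℕ) (hb' : 1 ≤ b') :
    (1 / (n : ℝ) ^ b') * ∑ j : Fin b' → Fin n,
        ‖(g + (1 / (b' : ℝ)) • ∑ k, (gradient (f (j k)) x' - gradient (f (j k)) x))
          - gradient F x'‖ ^ 2
      ≤ L ^ 2 / (b' : ℝ) * ‖x' - x‖ ^ 2 + ‖g - gradient F x‖ ^ 2 := by
  have hn0 : (n : ℝ) ≠ 0 := by
    have : (0:ℝ) < n := by exact_mod_cast hn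
    linarith
  have hb0 : (b' : ℝ) ≠ 0 := by
    have : (0:ℝ) < b' := by exact_mod_cast hb'
    linarith
  -- gradient of F is the average of the gradients
  have hgrad : ∀ y : EuclideanSpace ℝ (Fin d), gradient F y = (n : ℝ)⁻¹ • ∑ i, gradient (f i) y := by
    intro y
    have h1 : fderiv ℝ (fun z => ∑ i, f i z) y = ∑ i, fderiv ℝ (f i) y :=
      fderiv_fun_sum (fun i _ => (hf i).differentiableAt)
    have h2 : fderiv ℝ F y = (n : ℝ)⁻¹ • ∑ i, fderiv ℝ (f i) y := by
      have hds : DifferentiableAt ℝ (fun z => ∑ i, f i z) y :=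
        DifferentiableAt.fun_sum (fun i _ => (hf i).differentiableAt)
      rw [hF]
      simp_rw [one_div]
      rw [fderiv_const_mul hds, h1]
    simp only [gradient, h2, map_smul, map_sum]
  set Y : Fin n → EuclideanSpace ℝ (Fin d) :=
    fun i => gradient (f i) x' - gradient (f i) x with hYdef
  have hYi : ∀ i, gradient (f i) x' - gradient (f i) x = Y i := fun i => rfl
  set μ : EuclideanSpace ℝ (Fin d) := (n : ℝ)⁻¹ • ∑ i, Y i with hμdef
  set W : Fin n → EuclideanSpace ℝ (Fin d) := fun i => Y i - μ with hWdef
  have hWi : ∀ i, W i = Y i - μ := fun i => rfl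
  have hsumY : ∑ i, Y i = (n : ℝ) • μ := by
    rw [hμdef, smul_smul, mul_inv_cancel₀ hn0, one_smul]
  have hWsum : ∑ i, W i = 0 := by
    simp only [hWi, Finset.sum_sub_distrib, Finset.sum_const, Finset.card_univ,
      Fintype.card_fin, hsumY]
    rw [sub_eq_zero, Nat.cast_smul_eq_nsmul]
  have hmu : gradient F x' = gradient F x + μ := by
    rw [hgrad x', hgrad x, hμdef, ← smul_add, ← Finset.sum_add_distrib]
    congr 1
    refine Finset.sum_congr rfl (fun i _ => ?_)
    rw [← hYi i]
    abel
  have hkey : ∀ j : Fin b' → Fin n,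
      (g + (1 / (b' : ℝ)) • ∑ k, (gradient (f (j k)) x' - gradient (f (j k)) x))
        - gradient F x' = (g - gradient F x) + (1 / (b' : ℝ)) • ∑ k, W (j k) := by
    intro j
    have h1 : ∑ k, W (j k) = (∑ k, Y (j k)) - (b' : ℝ) • μ := by
      simp only [hWi, Finset.sum_sub_distrib, Finset.sum_const, Finset.card_univ,
        Fintype.card_fin, Nat.cast_smul_eq_nsmul]
    simp only [hYi]
    rw [h1, smul_sub, smul_smul, one_div, inv_mul_cancel₀ hb0, one_smul, hmu]
    abel
  have hexp : ∀ j : Fin b' → Fin n,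
      ‖(g - gradient F x) + (1 / (b' : ℝ)) • ∑ k, W (j k)‖ ^ 2
        = ‖g - gradient F x‖ ^ 2
          + 2 * ((1 / (b' : ℝ)) * ⟪g - gradient F x, ∑ k, W (j k)⟫)
          + (1 / (b' : ℝ)) ^ 2 * ‖∑ k, W (j k)‖ ^ 2 := by
    intro j
    rw [norm_add_sq_real, real_inner_smul_right, norm_smul, mul_pow,
      Real.norm_eq_abs, sq_abs]
  set S := ∑ j : Fin b' → Fin n, ‖∑ k, W (j k)‖ ^ 2 with hSdef
  have hsum : ∑ j : Fin b' → Fin n,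
      ‖(g + (1 / (b' : ℝ)) • ∑ k, (gradient (f (j k)) x' - gradient (f (j k)) x))
        - gradient F x'‖ ^ 2
      = (n : ℝ) ^ b' * ‖g - gradient F x‖ ^ 2 + (1 / (b' : ℝ)) ^ 2 * S := by
    rw [Finset.sum_congr rfl (fun j _ => by rw [hkey j, hexp j])]
    simp only [Finset.sum_add_distrib, Finset.sum_const, Finset.card_univ,
      Fintype.card_fun, Fintype.card_fin, ← Finset.mul_sum, ← inner_sum,
      aux_sum_zero W hWsum b', inner_zero_right, mul_zero, add_zero,
      nsmul_eq_mul, hSdef]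
    push_cast
    ring
  have hW2 : ∑ i, ‖W i‖ ^ 2 ≤ ∑ i, ‖Y i‖ ^ 2 := by
    have h1 : ∀ i : Fin n, ‖W i‖ ^ 2 = ‖Y i‖ ^ 2 - 2 * ⟪Y i, μ⟫ + ‖μ‖ ^ 2 := by
      intro i; rw [hWi, norm_sub_sq_real]
    have h2 : ∑ i, ⟪Y i, μ⟫ = (n : ℝ) * ‖μ‖ ^ 2 := by
      rw [← sum_inner, hsumY, real_inner_smul_left, real_inner_self_eq_norm_sq]
    have h3 : (0:ℝ) ≤ (n:ℝ) * ‖μ‖ ^ 2 := by positivity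
    simp_rw [h1, Finset.sum_add_distrib, Finset.sum_sub_distrib, Finset.sum_const,
      Finset.card_univ, Fintype.card_fin, ← Finset.mul_sum, h2, nsmul_eq_mul]
    nlinarith [h3]
  have hB := aux_sum_norm W hWsum b'
  have havg' := havg x' x
  simp only [hYi] at havg'
  have hnpos : (0:ℝ) < n := by exact_mod_cast hn
  have hbpos : (0:ℝ) < b' := by exact_mod_cast hb'
  have hnb : ((n:ℝ))^b' ≠ 0 := by positivity
  set TW := ∑ i, ‖W i‖ ^ 2 with hTW
  set TY := ∑ i, ‖Y i‖ ^ 2 with hTYdef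
  have hSval : S = (b':ℝ) * (n:ℝ)^b' * TW / n := (eq_div_iff hn0).mpr hB
  have hTYle : TY ≤ (n:ℝ) * (L^2 * ‖x' - x‖^2) := by
    calc TY = (n:ℝ) * ((1/(n:ℝ)) * TY) := by field_simp
      _ ≤ (n:ℝ) * (L^2 * ‖x' - x‖^2) :=
        mul_le_mul_of_nonneg_left havg' hnpos.le
  have hbn : (0:ℝ) < (b':ℝ) * n := by positivity
  calc (1 / (n : ℝ) ^ b') * ∑ j : Fin b' → Fin n,
        ‖(g + (1 / (b' : ℝ)) • ∑ k, (gradient (f (j k)) x' - gradient (f (j k)) x))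
          - gradient F x'‖ ^ 2
      = ‖g - gradient F x‖ ^ 2 + TW / ((b':ℝ) * n) := by
        rw [hsum, hSval]
        field_simp
    _ ≤ ‖g - gradient F x‖ ^ 2 + L ^ 2 / (b' : ℝ) * ‖x' - x‖ ^ 2 := by
        have h4 : TW / ((b':ℝ) * n) ≤ L ^ 2 / (b' : ℝ) * ‖x' - x‖ ^ 2 := by
          rw [div_le_iff₀ hbn]
          have h5 : L ^ 2 / (b' : ℝ) * ‖x' - x‖ ^ 2 * ((b':ℝ) * n)
              = (n:ℝ) * (L^2 * ‖x' - x‖^2) := by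
            field_simp
          rw [h5]
          linarith [hW2]
        linarith [h4]
    _ = L ^ 2 / (b' : ℝ) * ‖x' - x‖ ^ 2 + ‖g - gradient F x‖ ^ 2 := add_comm _ _
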